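/- For every complex number z with 0 < ‖z‖ < 2π, the series ∑_{n=0}^∞ B_n · z^n / n! converges and 1/(exp(z) − 1) = (1/z) · ∑_{n=0}^∞ B_n · z^n / n!, where B_n denotes the n-th Bernoulli number; equivalently, 1/(e^z − 1) = ∑_{n=−1}^∞ B_{n+1} z^n/(n+1)!. -/

import Mathlib

open scoped Nat
open Finset

lemma bern_div_fact_bound (n : ℕ) :
    |(bernoulli n : ℝ)| / n.factorial ≤ 4 / (2 * Real.pi) ^ n := by
  have hpi : (0:ℝ) < Real.pi := Real.pi_pos
  rcases Nat.even_or_odd n with he | ho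
  · obtain ⟨k, hk⟩ := he
    rcases Nat.eq_zero_or_pos k with rfl | hkpos
    · norm_num [hk]
    · have hk2 : n = 2 * k := by omega
      subst hk2
      have hkne : k ≠ 0 := by omega
      have hS := hasSum_zeta_nat hkne
      set L : ℝ := (-1 : ℝ) ^ (k + 1) * (2 : ℝ) ^ (2 * k - 1) * Real.pi ^ (2 * k) *
        (bernoulli (2 * k) : ℝ) / (2 * k)! with hL
      have hLnonneg : 0 ≤ L := hS.tsum_eq ▸ tsum_nonneg (fun n => by positivity)
      have hLle : L ≤ Real.pi ^ 2 / 6 := by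
        refine hasSum_le (fun n => ?_) hS hasSum_zeta_two
        rcases Nat.eq_zero_or_pos n with rfl | hn
        · rw [Nat.cast_zero, zero_pow (by omega : 2 * k ≠ 0), zero_pow two_ne_zero]
        · have h1 : (1:ℝ) ≤ (n : ℝ) := by exact_mod_cast hn
          have hple : (n:ℝ) ^ 2 ≤ (n:ℝ) ^ (2 * k) := pow_le_pow_right₀ h1 (by omega)
          exact one_div_le_one_div_of_le (by positivity) hple
      have hL2 : L ≤ 2 := by
        have : Real.pi ^ 2 ≤ 12 := by nlinarith [Real.pi_lt_d2, Real.pi_pos]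
        linarith
      have habs : |(bernoulli (2 * k) : ℝ)| / (2 * k)! =
          L / ((2:ℝ) ^ (2 * k - 1) * Real.pi ^ (2 * k)) := by
        have h2 : (0:ℝ) < (2:ℝ) ^ (2 * k - 1) * Real.pi ^ (2 * k) := by positivity
        rw [eq_div_iff (ne_of_gt h2)]
        have : |L| = (2:ℝ) ^ (2 * k - 1) * Real.pi ^ (2 * k) *
            (|(bernoulli (2 * k) : ℝ)| / (2 * k)!) := by
          rw [hL, abs_div, abs_mul, abs_mul, abs_mul, abs_pow, abs_pow, abs_pow, abs_neg,
            abs_one, one_pow, one_mul, abs_two, abs_of_pos hpi, Nat.abs_cast, mul_div_assoc]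
        rw [abs_of_nonneg hLnonneg] at this
        linarith [this]
      rw [habs]
      have hpow : (2 * Real.pi) ^ (2 * k) = 2 * ((2:ℝ) ^ (2 * k - 1) * Real.pi ^ (2 * k)) := by
        rw [mul_pow, ← mul_assoc]
        congr 1
        rw [← pow_succ']
        congr 1
        omega
      rw [hpow]
      rw [div_le_div_iff₀ (by positivity) (by positivity)]
      have h2 : (0:ℝ) < (2:ℝ) ^ (2 * k - 1) * Real.pi ^ (2 * k) := by positivity
      nlinarith [mul_le_mul_of_nonneg_right hL2 (le_of_lt h2)]
  · rcases Nat.lt_or_ge n 2 with hn | hn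
    · interval_cases n
      · simp at ho
      · have : (2:ℝ) * Real.pi ≤ 8 := by nlinarith [Real.pi_le_four]
        have h0 : (0:ℝ) < 2 * Real.pi := by positivity
        rw [pow_one, bernoulli_one]
        push_cast
        rw [abs_of_nonpos (by norm_num), div_le_div_iff₀ (by norm_num) h0]
        norm_num
        linarith
    · have : bernoulli n = 0 := by
        rw [bernoulli_eq_bernoulli'_of_ne_one (by omega)]
        exact bernoulli'_eq_zero_of_odd ho (by omega)
      rw [this]
      simp
      positivity

set_option maxHeartbeats 1000000 in
theorem one_div_exp_sub_one_eq_tsum_bernoulli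
    (z : ℂ) (hz : 0 < ‖z‖) (hz2 : ‖z‖ < 2 * Real.pi) :
    Summable (fun n : ℕ => (bernoulli n : ℂ) * z ^ n / (n.factorial : ℂ)) ∧
      1 / (Complex.exp z - 1) =
        (1 / z) * ∑' n : ℕ, (bernoulli n : ℂ) * z ^ n / (n.factorial : ℂ) := by
  have hpi : (0:ℝ) < Real.pi := Real.pi_pos
  set a : ℕ → ℂ := fun n => (bernoulli n : ℂ) * z ^ n / (n.factorial : ℂ) with ha
  have hnorm_a : ∀ n, ‖a n‖ = |(bernoulli n : ℝ)| / n.factorial * ‖z‖ ^ n := by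
    intro n
    rw [ha]
    simp only [norm_div, norm_mul, norm_pow, Complex.norm_natCast]
    rw [← Complex.ofReal_ratCast, Complex.norm_real, Real.norm_eq_abs]
    ring
  have hbound : ∀ n, ‖a n‖ ≤ 4 * (‖z‖ / (2 * Real.pi)) ^ n := by
    intro n
    rw [hnorm_a n, div_pow]
    have h1 := bern_div_fact_bound n
    have h2 : (0:ℝ) ≤ ‖z‖ ^ n := by positivity
    calc |(bernoulli n : ℝ)| / n.factorial * ‖z‖ ^ n
        ≤ 4 / (2 * Real.pi) ^ n * ‖z‖ ^ n := by gcongr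
      _ = 4 * (‖z‖ ^ n / (2 * Real.pi) ^ n) := by ring
  have hgeo : Summable (fun n : ℕ => 4 * (‖z‖ / (2 * Real.pi)) ^ n) := by
    apply Summable.mul_left
    apply summable_geometric_of_lt_one (by positivity)
    rw [div_lt_one (by positivity)]
    exact hz2
  have hanorm : Summable (fun n => ‖a n‖) :=
    Summable.of_nonneg_of_le (fun n => norm_nonneg _) hbound hgeo
  have hsa : Summable a := hanorm.of_norm
  refine ⟨hsa, ?_⟩
  -- the second series : exp z - 1
  set b : ℕ → ℂ := fun n => if n = 0 then 0 else z ^ n / (n.factorial : ℂ) with hb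
  have hbnorm : Summable (fun n => ‖b n‖) := by
    refine Summable.of_nonneg_of_le (fun n => norm_nonneg _) (fun n => ?_)
      (NormedSpace.norm_expSeries_div_summable z)
    by_cases h : n = 0 <;> simp [hb, h]
  have hexpsum : Summable (fun n : ℕ => z ^ n / (n.factorial : ℂ)) :=
    NormedSpace.expSeries_div_summable z
  have htsum_b : ∑' n, b n = Complex.exp z - 1 := by
    have h1 : Complex.exp z = ∑' n : ℕ, z ^ n / (n.factorial : ℂ) := by
      rw [Complex.exp_eq_exp_ℂ, NormedSpace.exp_eq_tsum_div]
    have h2 := hexpsum.tsum_eq_zero_add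
    have h3 := hbnorm.of_norm.tsum_eq_zero_add
    rw [h3, h1, h2]
    simp only [hb, pow_zero, Nat.factorial_zero, Nat.cast_one, if_pos rfl]
    rw [show (∑' n : ℕ, b (n + 1)) = ∑' n : ℕ, z ^ (n+1) / ((n+1).factorial : ℂ) by
      apply tsum_congr; intro n; simp [hb]]
    ring
  -- Cauchy product
  have hcauchy : (∑' n, a n) * (∑' n, b n) = z := by
    rw [tsum_mul_tsum_eq_tsum_sum_antidiagonal_of_summable_norm hanorm hbnorm]
    have hcoeff : ∀ n : ℕ, (∑ kl ∈ antidiagonal n, a kl.1 * b kl.2) =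
        (if n = 1 then z else 0) := by
      intro n
      have key : (∑ kl ∈ antidiagonal n, a kl.1 * b kl.2) =
          (PowerSeries.coeff n (bernoulliPowerSeries ℂ * (PowerSeries.exp ℂ - 1))) * z ^ n := by
        rw [PowerSeries.coeff_mul, Finset.sum_mul]
        apply Finset.sum_congr rfl
        intro kl hkl
        rw [Finset.HasAntidiagonal.mem_antidiagonal] at hkl
        have hc1 : (PowerSeries.coeff kl.1) (bernoulliPowerSeries ℂ) =
            (bernoulli kl.1 : ℂ) / (kl.1.factorial : ℂ) := by
          simp [bernoulliPowerSeries, PowerSeries.coeff_mk, Rat.cast_div]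
        have hc2 : (PowerSeries.coeff kl.2) (PowerSeries.exp ℂ - 1) =
            if kl.2 = 0 then 0 else 1 / (kl.2.factorial : ℂ) := by
          rw [map_sub, PowerSeries.coeff_exp]
          rcases eq_or_ne kl.2 0 with h | h
          · simp [h]
          · rw [PowerSeries.coeff_one, if_neg h, if_neg h]
            simp
        rw [hc1, hc2, ha, hb]
        dsimp only
        rcases eq_or_ne kl.2 0 with h | h
        · simp [h]
        · rw [if_neg h, if_neg h, ← hkl, pow_add]
          field_simp
      rw [key, bernoulliPowerSeries_mul_exp_sub_one, PowerSeries.coeff_X]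
      rcases eq_or_ne n 1 with h | h
      · simp [h]
      · simp [h]
    rw [tsum_congr hcoeff, tsum_ite_eq]
  rw [htsum_b] at hcauchy
  have hzne : z ≠ 0 := by
    intro h; rw [h, norm_zero] at hz; exact lt_irrefl 0 hz
  have hexpne : Complex.exp z - 1 ≠ 0 := by
    intro h
    rw [h, mul_zero] at hcauchy
    exact hzne hcauchy.symm
  have hfin : (1:ℂ) / (Complex.exp z - 1) = (∑' n, a n) / z := by
    rw [div_eq_div_iff hexpne hzne, one_mul]
    exact hcauchy.symm
  rw [hfin]
  ring
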